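/- Let a > 0 and set ω = √(5/(4a³)). Define q1(t) = a R(ωt) e, q2(t) = 0, q3(t) = −a R(ωt) e, where e = (1, 0) and R(θ) is the rotation of ℝ² by angle θ. Then q1, q2, q3 form a solution of the planar three-body problem with equal masses m1 = m2 = m3 = 1, and all three mutual distances are constant: ‖q_1(t) − q_2(t)‖ = ‖q_2(t) − q_3(t)‖ = a and ‖q_1(t) − q_3(t)‖ = 2a for all t. In particular, a collinear (Euler) relative equilibrium exists. -/

import Mathlib

/-- Rotation of the plane by angle `θ`. -/
noncomputable def planeRot (θ : ℝ) (p : EuclideanSpace ℝ (Fin 2)) :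
    EuclideanSpace ℝ (Fin 2) :=
  (WithLp.equiv 2 (Fin 2 → ℝ)).symm
    ![Real.cos θ * p 0 - Real.sin θ * p 1, Real.sin θ * p 0 + Real.cos θ * p 1]

noncomputable def Lmap : (Fin 2 → ℝ) →L[ℝ] EuclideanSpace ℝ (Fin 2) :=
  (PiLp.continuousLinearEquiv 2 ℝ (fun _ : Fin 2 => ℝ)).symm.toContinuousLinearMap

lemma hasDerivAt_vec {f g : ℝ → ℝ} {f' g' : ℝ} {t : ℝ}
    (hf : HasDerivAt f f' t) (hg : HasDerivAt g g' t) :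
    HasDerivAt (fun t => (WithLp.equiv 2 (Fin 2 → ℝ)).symm ![f t, g t])
      ((WithLp.equiv 2 (Fin 2 → ℝ)).symm ![f' , g']) t := by
  have h : HasDerivAt (fun t => (![f t, g t] : Fin 2 → ℝ)) ![f', g'] t := by
    apply hasDerivAt_pi.2
    intro i
    fin_cases i <;> simpa
  exact (Lmap.hasFDerivAt.comp_hasDerivAt t h : )

noncomputable def circ (b ω t : ℝ) : EuclideanSpace ℝ (Fin 2) :=
  (WithLp.equiv 2 (Fin 2 → ℝ)).symm ![b * Real.cos (ω * t), b * Real.sin (ω * t)]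

lemma circ_apply_zero (b ω t : ℝ) : circ b ω t 0 = b * Real.cos (ω * t) := rfl
lemma circ_apply_one (b ω t : ℝ) : circ b ω t 1 = b * Real.sin (ω * t) := rfl

lemma hasDerivAt_cos_mul (b ω t : ℝ) :
    HasDerivAt (fun t => b * Real.cos (ω * t)) (-(b * ω * Real.sin (ω * t))) t := by
  have h := ((Real.hasDerivAt_cos (ω * t)).comp t ((hasDerivAt_id t).const_mul ω)).const_mul b
  exact h.congr_deriv (by simp; ring)

lemma hasDerivAt_sin_mul (b ω t : ℝ) :
    HasDerivAt (fun t => b * Real.sin (ω * t)) (b * ω * Real.cos (ω * t)) t := by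
  have h := ((Real.hasDerivAt_sin (ω * t)).comp t ((hasDerivAt_id t).const_mul ω)).const_mul b
  exact h.congr_deriv (by simp; ring)

lemma deriv_circ (b ω : ℝ) :
    deriv (circ b ω) = fun t =>
      (WithLp.equiv 2 (Fin 2 → ℝ)).symm ![-(b * ω * Real.sin (ω * t)), b * ω * Real.cos (ω * t)] := by
  funext t
  exact (hasDerivAt_vec (hasDerivAt_cos_mul b ω t) (hasDerivAt_sin_mul b ω t)).deriv

lemma deriv2_circ (b ω : ℝ) :
    deriv (deriv (circ b ω)) = fun t => circ (-(b * ω ^ 2)) ω t := by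
  rw [deriv_circ]
  funext t
  have h1 : HasDerivAt (fun t => -(b * ω * Real.sin (ω * t))) (-(b * ω ^ 2) * Real.cos (ω * t)) t := by
    have := (hasDerivAt_sin_mul (b * ω) ω t).neg
    exact this.congr_deriv (by ring)
  have h2 : HasDerivAt (fun t => b * ω * Real.cos (ω * t)) (-(b * ω ^ 2) * Real.sin (ω * t)) t := by
    have := hasDerivAt_cos_mul (b * ω) ω t
    convert this using 1 <;> ring_nf
  exact ((hasDerivAt_vec h1 h2).deriv).trans rfl

lemma norm_circ (b ω t : ℝ) : ‖circ b ω t‖ = |b| := by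
  rw [EuclideanSpace.norm_eq]
  simp [circ, Fin.sum_univ_two]
  rw [show (b * Real.cos (ω*t))^2 + (b * Real.sin (ω*t))^2
      = b^2 * (Real.sin (ω*t)^2 + Real.cos (ω*t)^2) by ring,
    Real.sin_sq_add_cos_sq, mul_one, Real.sqrt_sq_eq_abs]

lemma circ_sub (b c ω t : ℝ) : circ b ω t - circ c ω t = circ (b - c) ω t := by
  ext i
  fin_cases i <;>
    simp [circ_apply_zero, circ_apply_one, PiLp.sub_apply] <;> ring

lemma smul_circ (r b ω t : ℝ) : r • circ b ω t = circ (r * b) ω t := by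
  ext i
  fin_cases i <;>
    simp [circ_apply_zero, circ_apply_one, PiLp.smul_apply, smul_eq_mul] <;> ring

lemma circ_add (b c ω t : ℝ) : circ b ω t + circ c ω t = circ (b + c) ω t := by
  ext i
  fin_cases i <;>
    simp [circ_apply_zero, circ_apply_one, PiLp.add_apply] <;> ring

lemma circ_zero (ω t : ℝ) : circ 0 ω t = 0 := by
  ext i
  fin_cases i <;> simp [circ_apply_zero, circ_apply_one]

lemma neg_circ (b ω t : ℝ) : -circ b ω t = circ (-b) ω t := by
  calc -circ b ω t = circ 0 ω t - circ b ω t := by rw [circ_zero, zero_sub]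
  _ = circ (0 - b) ω t := circ_sub 0 b ω t
  _ = circ (-b) ω t := by rw [zero_sub]

lemma circ_ne (b c ω t : ℝ) (h : b ≠ c) : circ b ω t ≠ circ c ω t := by
  intro hEq
  apply h
  have h0 : circ b ω t 0 = circ c ω t 0 := by rw [hEq]
  have h1 : circ b ω t 1 = circ c ω t 1 := by rw [hEq]
  rw [circ_apply_zero, circ_apply_zero] at h0
  rw [circ_apply_one, circ_apply_one] at h1
  linear_combination Real.cos (ω * t) * h0 + Real.sin (ω * t) * h1 +
    (c - b) * (Real.sin_sq_add_cos_sq (ω * t))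

/-- The Euler collinear relative equilibrium for equal masses: with
`ω = √(5/(4a³))`, the bodies at `a R(ωt) e`, `0`, `−a R(ωt) e` (where
`e = (1,0)`) form a solution of the equal-mass planar three-body problem in
which all three mutual distances are constant. -/
theorem euler_collinear_relative_equilibrium
    (a : ℝ) (ha : 0 < a) (ω : ℝ) (hω : ω = Real.sqrt (5 / (4 * a ^ 3)))
    (e : EuclideanSpace ℝ (Fin 2))
    (he : e = (WithLp.equiv 2 (Fin 2 → ℝ)).symm ![1, 0])
    (q1 q2 q3 : ℝ → EuclideanSpace ℝ (Fin 2))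
    (hq1 : q1 = fun t => a • planeRot (ω * t) e)
    (hq2 : q2 = fun _ => 0)
    (hq3 : q3 = fun t => -(a • planeRot (ω * t) e)) :
    (∀ t, q1 t ≠ q2 t) ∧ (∀ t, q1 t ≠ q3 t) ∧ (∀ t, q2 t ≠ q3 t) ∧
    (∀ t, deriv (deriv q1) t =
      (‖q2 t - q1 t‖ ^ 3)⁻¹ • (q2 t - q1 t) +
        (‖q3 t - q1 t‖ ^ 3)⁻¹ • (q3 t - q1 t)) ∧
    (∀ t, deriv (deriv q2) t =
      (‖q1 t - q2 t‖ ^ 3)⁻¹ • (q1 t - q2 t) +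
        (‖q3 t - q2 t‖ ^ 3)⁻¹ • (q3 t - q2 t)) ∧
    (∀ t, deriv (deriv q3) t =
      (‖q1 t - q3 t‖ ^ 3)⁻¹ • (q1 t - q3 t) +
        (‖q2 t - q3 t‖ ^ 3)⁻¹ • (q2 t - q3 t)) ∧
    (∀ t, ‖q1 t - q2 t‖ = a) ∧ (∀ t, ‖q2 t - q3 t‖ = a) ∧
    (∀ t, ‖q1 t - q3 t‖ = 2 * a) := by
  have ha' : a ≠ 0 := ha.ne'
  have hω2 : ω ^ 2 = 5 / (4 * a ^ 3) := by
    rw [hω]; exact Real.sq_sqrt (by positivity)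
  have hq1' : q1 = circ a ω := by
    funext t; ext i
    fin_cases i <;>
      simp [hq1, he, planeRot, circ, PiLp.smul_apply, smul_eq_mul]
  have hq3' : q3 = circ (-a) ω := by
    funext t
    have : q3 t = -(q1 t) := by rw [hq1, hq3]
    rw [this, hq1', neg_circ]
  -- differences
  have d12 : ∀ t, q1 t - q2 t = circ a ω t := by
    intro t; rw [hq1', hq2]; simp
  have d21 : ∀ t, q2 t - q1 t = circ (-a) ω t := by
    intro t; rw [hq1', hq2]; simp [neg_circ]
  have d13 : ∀ t, q1 t - q3 t = circ (2 * a) ω t := by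
    intro t; rw [hq1', hq3', circ_sub]; norm_num; rw [two_mul]
  have d31 : ∀ t, q3 t - q1 t = circ (-(2 * a)) ω t := by
    intro t; rw [hq1', hq3', circ_sub]; ring_nf
  have d23 : ∀ t, q2 t - q3 t = circ a ω t := by
    intro t; rw [hq3', hq2]; simp [neg_circ]
  have d32 : ∀ t, q3 t - q2 t = circ (-a) ω t := by
    intro t; rw [hq3', hq2]; simp
  have habs : |a| = a := abs_of_pos ha
  have habs2 : |2 * a| = 2 * a := abs_of_pos (by linarith)
  have habsn : |(-a)| = a := by rw [abs_neg, habs]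
  have habsn2 : |(-(2 * a))| = 2 * a := by rw [abs_neg, habs2]
  refine ⟨?_, ?_, ?_, ?_, ?_, ?_, ?_, ?_, ?_⟩
  · intro t; rw [hq1', hq2]
    rw [show (0 : EuclideanSpace ℝ (Fin 2)) = circ 0 ω t from (circ_zero ω t).symm]
    exact circ_ne _ _ _ _ ha'
  · intro t; rw [hq1', hq3']
    exact circ_ne _ _ _ _ (by intro h; apply ha'; linarith)
  · intro t; rw [hq2, hq3']
    rw [show (0 : EuclideanSpace ℝ (Fin 2)) = circ 0 ω t from (circ_zero ω t).symm]
    exact circ_ne _ _ _ _ (by intro h; apply ha'; linarith)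
  · intro t
    rw [d21 t, d31 t, hq1', deriv2_circ, norm_circ, norm_circ, habsn, habsn2,
      smul_circ, smul_circ, circ_add]
    show circ (-(a * ω ^ 2)) ω t = _
    have key1 : -(a * ω ^ 2) = (a ^ 3)⁻¹ * -a + ((2 * a) ^ 3)⁻¹ * -(2 * a) := by
      rw [hω2]; field_simp; ring
    rw [key1]
  · intro t
    have hd2 : deriv (deriv q2) t = 0 := by
      rw [hq2]; simp
    rw [hd2, d12 t, d32 t, norm_circ, norm_circ, habs, habsn,
      smul_circ, smul_circ, circ_add]
    rw [show (a ^ 3)⁻¹ * a + (a ^ 3)⁻¹ * -a = 0 by ring, circ_zero]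
  · intro t
    rw [d13 t, d23 t, hq3', deriv2_circ, norm_circ, norm_circ, habs2, habs,
      smul_circ, smul_circ, circ_add]
    show circ (-(-a * ω ^ 2)) ω t = _
    have key3 : -(-a * ω ^ 2) = ((2 * a) ^ 3)⁻¹ * (2 * a) + (a ^ 3)⁻¹ * a := by
      rw [hω2]; field_simp; ring
    rw [key3]
  · intro t; rw [d12 t, norm_circ, habs]
  · intro t; rw [d23 t, norm_circ, habs]
  · intro t; rw [d13 t, norm_circ, habs2]
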